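/- Let G be a finite simple graph and m1, m2 natural numbers. If G is a minor of the complete bipartite graph K_{m1,m2}, then there exists a set S ⊆ V(G) such that G − S is bipartite, |S| ≤ min(m1, m2), and |V(G)| + |S| ≤ m1 + m2. In particular, if t denotes the minimum size of an odd cycle transversal of G, then any complete bipartite graph K_{m1,m2} containing G as a minor has m1 + m2 ≥ |V(G)| + t. -/

import Mathlib

/-- A minor model of `G` in `H`: a family of pairwise disjoint nonempty branch sets,
each inducing a connected subgraph of `H`, with an edge of `H` joining the branch sets
of any two adjacent vertices of `G`. -/
structure MinorModel {V W : Type*} (G : SimpleGraph V) (H : SimpleGraph W) where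
  B : V → Set W
  nonempty : ∀ v, (B v).Nonempty
  pairwiseDisjoint : ∀ ⦃u v : V⦄, u ≠ v → Disjoint (B u) (B v)
  connected : ∀ v, (H.induce (B v)).Connected
  edge : ∀ ⦃u v : V⦄, G.Adj u v → ∃ x ∈ B u, ∃ y ∈ B v, H.Adj x y

/-- `G` is a minor of `H`. -/
def SimpleGraph.IsMinorOf {V W : Type*} (G : SimpleGraph V) (H : SimpleGraph W) : Prop :=
  Nonempty (MinorModel G H)

/-- A bipartite assignment of `G` into the complete bipartite graph `K_{m1,m2}`. -/
def SimpleGraph.BipartiteAssignment {V : Type*} (G : SimpleGraph V) (m1 m2 : ℕ)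
    (A1 A2 : Set V) : Prop :=
  A1 ∪ A2 = Set.univ ∧ A1.ncard ≤ m1 ∧ A2.ncard ≤ m2 ∧
    ∀ ⦃u v : V⦄, G.Adj u v → (u ∈ A1 ∧ v ∈ A2) ∨ (u ∈ A2 ∧ v ∈ A1)

/-- `G − S` is bipartite, i.e. `S` is an odd cycle transversal of `G`. -/
def SimpleGraph.DelBipartite {V : Type*} (G : SimpleGraph V) (S : Set V) : Prop :=
  ∃ X Y : Set V, Disjoint X Y ∧ X ∪ Y = Sᶜ ∧
    ∀ ⦃u v : V⦄, G.Adj u v → u ∉ S → v ∉ S → (u ∈ X ∧ v ∈ Y) ∨ (u ∈ Y ∧ v ∈ X)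

/-- If a finite simple graph `G` is a minor of `K_{m1,m2}`, then there is an
odd cycle transversal `S` of `G` with `|S| ≤ min m1 m2` and `|V(G)| + |S| ≤ m1 + m2`.
In particular, `m1 + m2 ≥ |V(G)| + t`, where `t` is the minimum size of an odd cycle
transversal of `G`. -/
theorem stmt3 {V : Type*} [Fintype V] (G : SimpleGraph V) (m1 m2 : ℕ)
    (h : G.IsMinorOf (completeBipartiteGraph (Fin m1) (Fin m2))) :
    (∃ S : Set V, G.DelBipartite S ∧ S.ncard ≤ min m1 m2 ∧
      Fintype.card V + S.ncard ≤ m1 + m2) ∧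
    Fintype.card V + sInf {n : ℕ | ∃ S : Set V, G.DelBipartite S ∧ S.ncard = n} ≤ m1 + m2 := by
  classical
  obtain ⟨M⟩ := h
  set W := Fin m1 ⊕ Fin m2 with hW
  let L : Set W := Set.range Sum.inl
  let R : Set W := Set.range Sum.inr
  let S : Set V := {v | (M.B v ∩ L).Nonempty ∧ (M.B v ∩ R).Nonempty}
  have hside : ∀ v, v ∉ S → M.B v ⊆ L ∨ M.B v ⊆ R := by
    intro v hv
    by_contra hc
    push_neg at hc
    obtain ⟨hL, hR⟩ := hc
    apply hv
    constructor
    · obtain ⟨x, hx, hxR⟩ := Set.not_subset.mp hR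
      refine ⟨x, hx, ?_⟩
      rcases x with a | b
      · exact ⟨a, rfl⟩
      · exact absurd ⟨b, rfl⟩ hxR
    · obtain ⟨x, hx, hxL⟩ := Set.not_subset.mp hL
      refine ⟨x, hx, ?_⟩
      rcases x with a | b
      · exact absurd ⟨a, rfl⟩ hxL
      · exact ⟨b, rfl⟩
  let X : Set V := {v | v ∉ S ∧ M.B v ⊆ L}
  let Y : Set V := {v | v ∉ S ∧ M.B v ⊆ R}
  have hX : ∀ v, v ∉ S → ∀ x ∈ M.B v, x.isLeft → v ∈ X := by
    intro v hv x hx hxL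
    rcases hside v hv with h' | h'
    · exact ⟨hv, h'⟩
    · exfalso
      obtain ⟨a, rfl⟩ := Sum.isLeft_iff.mp hxL
      obtain ⟨b, hb⟩ := h' hx
      exact Sum.inr_ne_inl hb
  have hY : ∀ v, v ∉ S → ∀ x ∈ M.B v, x.isRight → v ∈ Y := by
    intro v hv x hx hxR
    rcases hside v hv with h' | h'
    · exfalso
      obtain ⟨a, rfl⟩ := Sum.isRight_iff.mp hxR
      obtain ⟨b, hb⟩ := h' hx
      exact Sum.inl_ne_inr hb
    · exact ⟨hv, h'⟩
  have hdel : G.DelBipartite S := by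
    refine ⟨X, Y, ?_, ?_, ?_⟩
    · rw [Set.disjoint_left]
      rintro v ⟨hvS, hvL⟩ ⟨_, hvR⟩
      obtain ⟨x, hx⟩ := M.nonempty v
      obtain ⟨a, ha⟩ := hvL hx
      obtain ⟨b, hb⟩ := hvR hx
      rw [← ha] at hb
      exact Sum.inr_ne_inl hb
    · ext v
      constructor
      · rintro (⟨hv, _⟩ | ⟨hv, _⟩) <;> exact hv
      · intro hv
        rcases hside v hv with h' | h'
        · exact Or.inl ⟨hv, h'⟩
        · exact Or.inr ⟨hv, h'⟩
    · intro u v huv hu hv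
      obtain ⟨x, hx, y, hy, hadj⟩ := M.edge huv
      rcases hadj with ⟨hxl, hyr⟩ | ⟨hxr, hyl⟩
      · exact Or.inl ⟨hX u hu x hx hxl, hY v hv y hy hyr⟩
      · exact Or.inr ⟨hY u hu x hx hxr, hX v hv y hy hyl⟩
  -- cardinality of S ≤ m1 and ≤ m2
  have hLcard : L.ncard = m1 := by
    rw [Set.ncard_eq_toFinset_card']
    simp [L, Set.toFinset_range, Finset.card_image_of_injective _ Sum.inl_injective]
  have hRcard : R.ncard = m2 := by
    rw [Set.ncard_eq_toFinset_card']
    simp [R, Set.toFinset_range, Finset.card_image_of_injective _ Sum.inr_injective]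
  have hinj : ∀ (A : Set W), ∀ f : V → W, (∀ v ∈ S, f v ∈ M.B v ∩ A) → S.ncard ≤ A.ncard := by
    intro A f hf
    refine Set.ncard_le_ncard_of_injOn f (fun v hv => (hf v hv).2) ?_ (Set.toFinite A)
    intro u hu v hv huv
    by_contra hne
    exact Set.disjoint_left.mp (M.pairwiseDisjoint hne) (hf u hu).1 (huv ▸ (hf v hv).1)
  have hSm1 : S.ncard ≤ m1 := by
    rw [← hLcard]
    exact hinj L (fun v => if hv : (M.B v ∩ L).Nonempty then hv.choose else (M.nonempty v).choose)
      (fun v hv => by simp only [hv.1, dif_pos]; exact hv.1.choose_spec)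
  have hSm2 : S.ncard ≤ m2 := by
    rw [← hRcard]
    exact hinj R (fun v => if hv : (M.B v ∩ R).Nonempty then hv.choose else (M.nonempty v).choose)
      (fun v hv => by simp only [hv.2, dif_pos]; exact hv.2.choose_spec)
  -- total bound
  let t : V → Finset W := fun v => Finset.univ.filter (· ∈ M.B v)
  have htmem : ∀ v x, x ∈ t v ↔ x ∈ M.B v := by intro v x; simp [t]
  have htdisj : ∀ u ∈ Finset.univ, ∀ v ∈ Finset.univ, u ≠ v → Disjoint (t u) (t v) := by
    intro u _ v _ huv
    rw [Finset.disjoint_left]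
    intro x hxu hxv
    exact Set.disjoint_left.mp (M.pairwiseDisjoint huv) ((htmem u x).mp hxu) ((htmem v x).mp hxv)
  have hsum : ∑ v : V, (t v).card ≤ m1 + m2 := by
    rw [← Finset.card_biUnion htdisj]
    calc (Finset.univ.biUnion t).card ≤ (Finset.univ : Finset W).card :=
          Finset.card_le_card (Finset.subset_univ _)
      _ = m1 + m2 := by simp [hW]
  have hlow : ∀ v : V, 1 + (if v ∈ S then 1 else 0) ≤ (t v).card := by
    intro v
    by_cases hv : v ∈ S
    · rw [if_pos hv]
      obtain ⟨l, hl, a, ha⟩ := hv.1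
      obtain ⟨r, hr, b, hb⟩ := hv.2
      have h2 : 1 < (t v).card := Finset.one_lt_card.mpr
        ⟨l, (htmem v l).mpr hl, r, (htmem v r).mpr hr, by rw [← ha, ← hb]; exact Sum.inl_ne_inr⟩
      omega
    · rw [if_neg hv]
      obtain ⟨x, hx⟩ := M.nonempty v
      simpa using Finset.card_pos.mpr ⟨x, (htmem v x).mpr hx⟩
  have htotal : Fintype.card V + S.ncard ≤ m1 + m2 := by
    have h1 : ∑ v : V, (1 + (if v ∈ S then 1 else 0)) ≤ ∑ v : V, (t v).card :=
      Finset.sum_le_sum (fun v _ => hlow v)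
    have h2 : ∑ v : V, (1 + (if v ∈ S then 1 else 0)) = Fintype.card V + S.ncard := by
      rw [Finset.sum_add_distrib, Finset.sum_boole]
      simp [Set.ncard_eq_toFinset_card' S, Set.toFinset_setOf]
    exact h2 ▸ h1.trans hsum
  refine ⟨⟨S, hdel, le_min hSm1 hSm2, htotal⟩, ?_⟩
  have : sInf {n : ℕ | ∃ S : Set V, G.DelBipartite S ∧ S.ncard = n} ≤ S.ncard :=
    Nat.sInf_le ⟨S, hdel, rfl⟩
  omega
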